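/- Let (X̂, f̂, μ̂) be an invertible ergodic measure-preserving system, ε > 0, and u : X̂ → (0,∞) measurable with log u integrable; set χ := ∫ log u dμ̂. Then there exists a measurable function V₂ : X̂ → [1,∞) that is ε-fast (i.e., there is a measurable S̃ : X̂ → [1,∞) with V₂(f̂^q(x̂)) ≤ e^{qε} S̃(x̂) for μ̂-a.e. x̂ and all q ≥ 1) such that for μ̂-a.e. x̂ and all n ≥ 1, ∏_{j=1}^{n} u(f̂^{-j}(x̂)) ≤ V₂(x̂) e^{n(χ + ε)}. -/

import Mathlib

open MeasureTheory Finset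

namespace StmtAux

variable {X : Type*} [MeasurableSpace X]

/-- Birkhoff sums. -/
noncomputable def birk (T : X → X) (φ : X → ℝ) (n : ℕ) (x : X) : ℝ :=
  ∑ i ∈ Finset.range n, φ (T^[i] x)

lemma birk_zero (T : X → X) (φ : X → ℝ) (x : X) : birk T φ 0 x = 0 := by simp [birk]

lemma birk_succ (T : X → X) (φ : X → ℝ) (n : ℕ) (x : X) :
    birk T φ (n + 1) x = φ x + birk T φ n (T x) := by
  simp only [birk, Finset.sum_range_succ' (fun i => φ (T^[i] x)) n]
  simp [Function.iterate_succ_apply, add_comm]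

lemma birk_succ' (T : X → X) (φ : X → ℝ) (n : ℕ) (x : X) :
    birk T φ (n + 1) x = birk T φ n x + φ (T^[n] x) := by
  simp [birk, Finset.sum_range_succ]

lemma birk_measurable {T : X → X} {φ : X → ℝ} (hT : Measurable T) (hφ : Measurable φ)
    (n : ℕ) : Measurable (birk T φ n) := by
  apply Finset.measurable_sum
  intro i _
  exact hφ.comp (hT.iterate i)

lemma birk_integrable {μ : Measure X} [IsFiniteMeasure μ] {T : X → X} {φ : X → ℝ}
    (hT : MeasurePreserving T μ μ) (hφi : Integrable φ μ) (n : ℕ) :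
    Integrable (birk T φ n) μ := by
  apply integrable_finset_sum
  intro i _
  have : Integrable (fun x => φ (T^[i] x)) μ := by
    have := (hT.iterate i).map_eq
    exact Integrable.comp_measurable (by rwa [this]) (hT.measurable.iterate i)
  exact this

/-- The running maximum `Φ N x = max_{0 ≤ n ≤ N} (birk T φ n x)` (with the `0` term equal
to `0`). -/
noncomputable def Phi (T : X → X) (φ : X → ℝ) : ℕ → X → ℝ
  | 0 => fun _ => 0
  | (N + 1) => fun x => max (Phi T φ N x) (birk T φ (N + 1) x)

lemma Phi_succ (T : X → X) (φ : X → ℝ) (N : ℕ) (x : X) :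
    Phi T φ (N + 1) x = max (Phi T φ N x) (birk T φ (N + 1) x) := rfl

lemma Phi_nonneg (T : X → X) (φ : X → ℝ) (N : ℕ) (x : X) : 0 ≤ Phi T φ N x := by
  induction N with
  | zero => simp [Phi]
  | succ N ih => exact le_trans ih (le_max_left _ _)

lemma Phi_mono (T : X → X) (φ : X → ℝ) (N : ℕ) (x : X) :
    Phi T φ N x ≤ Phi T φ (N + 1) x := le_max_left _ _

lemma Phi_mono' (T : X → X) (φ : X → ℝ) {M N : ℕ} (h : M ≤ N) (x : X) :
    Phi T φ M x ≤ Phi T φ N x := by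
  induction N with
  | zero => simpa [Nat.le_zero.mp h] using le_refl _
  | succ N ih =>
    rcases Nat.lt_or_ge M (N + 1) with h' | h'
    · exact le_trans (ih (Nat.lt_succ_iff.mp h')) (Phi_mono T φ N x)
    · have : M = N + 1 := le_antisymm h h'
      simp [this]

lemma birk_le_Phi (T : X → X) (φ : X → ℝ) {n N : ℕ} (h : n ≤ N) (x : X) :
    birk T φ n x ≤ Phi T φ N x := by
  induction N with
  | zero =>
    have : n = 0 := Nat.le_zero.mp h
    simp [this, birk_zero, Phi]
  | succ N ih =>
    rcases Nat.lt_or_ge n (N + 1) with h' | h'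
    · exact le_trans (ih (Nat.lt_succ_iff.mp h')) (Phi_mono T φ N x)
    · have : n = N + 1 := le_antisymm h h'
      subst this
      exact le_max_right _ _

lemma Phi_le_of_pos (T : X → X) (φ : X → ℝ) (N : ℕ) (x : X) (hx : 0 < Phi T φ N x) :
    Phi T φ N x ≤ φ x + Phi T φ N (T x) := by
  induction N with
  | zero => simp [Phi] at hx
  | succ N ih =>
    rcases max_cases (Phi T φ N x) (birk T φ (N + 1) x) with ⟨heq, _⟩ | ⟨heq, _⟩
    · have hx' : 0 < Phi T φ N x := by rw [Phi_succ] at hx; rwa [heq] at hx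
      calc Phi T φ (N + 1) x = Phi T φ N x := by rw [Phi_succ, heq]
        _ ≤ φ x + Phi T φ N (T x) := ih hx'
        _ ≤ φ x + Phi T φ (N + 1) (T x) := by
            exact add_le_add le_rfl (Phi_mono T φ N (T x))
    · calc Phi T φ (N + 1) x = birk T φ (N + 1) x := by rw [Phi_succ, heq]
        _ = φ x + birk T φ N (T x) := birk_succ T φ N x
        _ ≤ φ x + Phi T φ (N + 1) (T x) := by
            exact add_le_add le_rfl (birk_le_Phi T φ (Nat.le_succ N) (T x))

lemma exists_birk_pos_of_Phi_pos (T : X → X) (φ : X → ℝ) (N : ℕ) (x : X)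
    (hx : 0 < Phi T φ N x) : ∃ n : ℕ, 0 < birk T φ (n + 1) x := by
  induction N with
  | zero => simp [Phi] at hx
  | succ N ih =>
    rw [Phi_succ] at hx
    rcases lt_max_iff.mp hx with h | h
    · exact ih h
    · exact ⟨N, h⟩

lemma Phi_measurable {T : X → X} {φ : X → ℝ} (hT : Measurable T) (hφ : Measurable φ)
    (N : ℕ) : Measurable (Phi T φ N) := by
  induction N with
  | zero => exact measurable_const
  | succ N ih => exact ih.max (birk_measurable hT hφ (N + 1))

lemma Phi_integrable {μ : Measure X} [IsFiniteMeasure μ] {T : X → X} {φ : X → ℝ}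
    (hT : MeasurePreserving T μ μ) (hφi : Integrable φ μ) (N : ℕ) :
    Integrable (Phi T φ N) μ := by
  induction N with
  | zero => exact integrable_const 0
  | succ N ih =>
    have h2 := birk_integrable hT hφi (N + 1)
    have := ih.sup h2
    have heq : (fun x => Phi T φ N x ⊔ birk T φ (N + 1) x) = Phi T φ (N + 1) := by
      funext x
      exact (Phi_succ T φ N x).symm
    rw [← heq]
    exact this

/-- Garsia's maximal ergodic theorem. -/
theorem maximal_ergodic (μ : Measure X) [IsProbabilityMeasure μ] {T : X → X}
    (hT : MeasurePreserving T μ μ) {φ : X → ℝ} (hφm : Measurable φ)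
    (hφi : Integrable φ μ) :
    0 ≤ ∫ x in {x | ∃ n : ℕ, 0 < birk T φ (n + 1) x}, φ x ∂μ := by
  set B : Set X := {x | ∃ n : ℕ, 0 < birk T φ (n + 1) x} with hBdef
  have hBeq : B = ⋃ n : ℕ, {x | 0 < birk T φ (n + 1) x} := by
    ext x; simp [hBdef]
  have hBmeas : MeasurableSet B := by
    rw [hBeq]
    exact MeasurableSet.iUnion fun n =>
      measurableSet_lt measurable_const (birk_measurable hT.measurable hφm (n + 1))
  -- the sets where the running max is positive
  set A : ℕ → Set X := fun N => {x | 0 < Phi T φ N x} with hAdef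
  have hAmeas : ∀ N, MeasurableSet (A N) := fun N =>
    measurableSet_lt measurable_const (Phi_measurable hT.measurable hφm N)
  -- Step 1: for each N, `0 ≤ ∫ x in A N, φ x ∂μ`.
  have step1 : ∀ N : ℕ, 0 ≤ ∫ x in A N, φ x ∂μ := by
    intro N
    have hΦi := Phi_integrable hT hφi N
    have hΦm := Phi_measurable hT.measurable hφm N
    have hΦTi : Integrable (fun x => Phi T φ N (T x)) μ :=
      Integrable.comp_measurable (by rwa [hT.map_eq]) hT.measurable
    -- pointwise : Φ N x - Φ N (T x) ≤ indicator (A N) φ x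
    have key : ∀ x, Phi T φ N x - Phi T φ N (T x) ≤ (A N).indicator φ x := by
      intro x
      by_cases hx : x ∈ A N
      · rw [Set.indicator_of_mem hx]
        have := Phi_le_of_pos T φ N x hx
        linarith
      · rw [Set.indicator_of_notMem hx]
        have h0 : Phi T φ N x = 0 := by
          have := Phi_nonneg T φ N x
          have hx' : ¬ 0 < Phi T φ N x := hx
          linarith [not_lt.mp hx']
        have := Phi_nonneg T φ N (T x)
        linarith
    have hint : ∫ x, (Phi T φ N x - Phi T φ N (T x)) ∂μ = 0 := by
      rw [integral_sub hΦi hΦTi]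
      have : ∫ x, Phi T φ N (T x) ∂μ = ∫ x, Phi T φ N x ∂μ := by
        rw [← integral_map hT.measurable.aemeasurable]
        · rw [hT.map_eq]
        · rw [hT.map_eq]; exact hΦm.aestronglyMeasurable
      rw [this, sub_self]
    have hindi : Integrable ((A N).indicator φ) μ := hφi.indicator (hAmeas N)
    have h2 : ∫ x, (Phi T φ N x - Phi T φ N (T x)) ∂μ ≤ ∫ x, (A N).indicator φ x ∂μ :=
      integral_mono (hΦi.sub hΦTi) hindi key
    rw [hint] at h2
    rwa [integral_indicator (hAmeas N)] at h2
  -- Step 2: `B = ⋃ N, A N` as a monotone union, pass to the limit.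
  have hAB : ∀ N, A N ⊆ B := by
    intro N x hx
    exact exists_birk_pos_of_Phi_pos T φ N x hx
  have hBA : ∀ x, x ∈ B → ∃ N, x ∈ A N := by
    intro x hx
    obtain ⟨n, hn⟩ := hx
    exact ⟨n + 1, lt_of_lt_of_le hn (birk_le_Phi T φ (le_refl (n + 1)) x)⟩
  have hAmono : ∀ N M, N ≤ M → A N ⊆ A M := by
    intro N M h x hx
    exact lt_of_lt_of_le hx (Phi_mono' T φ h x)
  -- dominated convergence
  have hconv : Filter.Tendsto (fun N => ∫ x, (A N).indicator φ x ∂μ) Filter.atTop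
      (nhds (∫ x, B.indicator φ x ∂μ)) := by
    apply tendsto_integral_of_dominated_convergence (fun x => |φ x|)
    · intro n
      exact (hφm.indicator (hAmeas n)).aestronglyMeasurable
    · exact hφi.abs
    · intro n
      filter_upwards with x
      rw [Real.norm_eq_abs]
      by_cases hx : x ∈ A n
      · rw [Set.indicator_of_mem hx]
      · rw [Set.indicator_of_notMem hx]; simp [abs_nonneg]
    · filter_upwards with x
      by_cases hx : x ∈ B
      · obtain ⟨N, hN⟩ := hBA x hx
        rw [Set.indicator_of_mem hx]
        apply Filter.Tendsto.congr' (f₁ := fun _ => φ x)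
        · filter_upwards [Filter.eventually_ge_atTop N] with M hM
          exact (Set.indicator_of_mem (hAmono N M hM hN) φ).symm
        · exact tendsto_const_nhds
      · rw [Set.indicator_of_notMem hx]
        apply Filter.Tendsto.congr' (f₁ := fun _ => (0:ℝ))
        · filter_upwards with M
          exact (Set.indicator_of_notMem (fun h => hx (hAB M h)) φ).symm
        · exact tendsto_const_nhds
  have : 0 ≤ ∫ x, B.indicator φ x ∂μ := by
    apply ge_of_tendsto hconv
    filter_upwards with N
    rw [integral_indicator (hAmeas N)]
    exact step1 N
  rwa [integral_indicator hBmeas] at this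


/-- If the mean of `φ` is negative and the system is ergodic, then a.e. the Birkhoff sums
are bounded above. -/
theorem bdd_of_neg_mean (μ : Measure X) [IsProbabilityMeasure μ] {T : X → X}
    (hT : MeasurePreserving T μ μ)
    (hE : ∀ s : Set X, MeasurableSet s → T ⁻¹' s = s → μ s = 0 ∨ μ s = 1)
    {φ : X → ℝ} (hφm : Measurable φ) (hφi : Integrable φ μ)
    (hneg : ∫ x, φ x ∂μ < 0) :
    ∀ᵐ x ∂μ, ∃ C : ℝ, ∀ n, birk T φ n x ≤ C := by
  set A : Set X := {x | ∃ C : ℕ, ∀ n, birk T φ n x ≤ C} with hAdef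
  have hAmeas : MeasurableSet A := by
    have : A = ⋃ C : ℕ, ⋂ n : ℕ, {x | birk T φ n x ≤ (C : ℝ)} := by
      ext x; simp [hAdef]
    rw [this]
    exact MeasurableSet.iUnion fun C => MeasurableSet.iInter fun n =>
      measurableSet_le (birk_measurable hT.measurable hφm n) measurable_const
  have hinv : T ⁻¹' A = A := by
    ext x
    simp only [Set.mem_preimage, hAdef, Set.mem_setOf_eq]
    constructor
    · rintro ⟨C, hC⟩
      obtain ⟨C', hC'⟩ := exists_nat_ge (max 0 (φ x + C))
      refine ⟨C', fun n => ?_⟩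
      cases n with
      | zero =>
        rw [birk_zero]
        exact le_trans (le_max_left 0 _) hC'
      | succ n =>
        rw [birk_succ]
        have h1 := hC n
        calc φ x + birk T φ n (T x) ≤ φ x + C := by linarith
          _ ≤ max 0 (φ x + C) := le_max_right _ _
          _ ≤ C' := hC'
    · rintro ⟨C, hC⟩
      obtain ⟨C', hC'⟩ := exists_nat_ge (C - φ x)
      refine ⟨C', fun n => ?_⟩
      have h1 := hC (n + 1)
      rw [birk_succ] at h1
      linarith
  rcases hE A hAmeas hinv with h0 | h1
  · exfalso
    set B : Set X := {x | ∃ n : ℕ, 0 < birk T φ (n + 1) x} with hBdef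
    have hBmeas : MeasurableSet B := by
      have : B = ⋃ n : ℕ, {x | 0 < birk T φ (n + 1) x} := by ext x; simp [hBdef]
      rw [this]
      exact MeasurableSet.iUnion fun n =>
        measurableSet_lt measurable_const (birk_measurable hT.measurable hφm (n + 1))
    have hsub : Bᶜ ⊆ A := by
      intro x hx
      simp only [hBdef, Set.mem_compl_iff, Set.mem_setOf_eq, not_exists, not_lt] at hx
      refine ⟨0, fun n => ?_⟩
      cases n with
      | zero => rw [birk_zero]; norm_num
      | succ n => exact le_trans (hx n) (by norm_num)
    have hBc : μ Bᶜ = 0 := le_antisymm (h0 ▸ measure_mono hsub) zero_le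
    have h2 := maximal_ergodic μ hT hφm hφi
    have h3 : ∫ x in B, φ x ∂μ + ∫ x in Bᶜ, φ x ∂μ = ∫ x, φ x ∂μ :=
      integral_add_compl hBmeas hφi
    have h4 : ∫ x in Bᶜ, φ x ∂μ = 0 := by
      rw [show μ.restrict Bᶜ = 0 from Measure.restrict_eq_zero.mpr hBc, integral_zero_measure]
    rw [← hBdef] at h2
    linarith
  · have hAc : μ Aᶜ = 0 := by
      rw [measure_compl hAmeas (measure_ne_top μ A), h1, measure_univ, tsub_self]
    rw [ae_iff]
    apply measure_mono_null _ hAc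
    intro x hx
    simp only [Set.mem_setOf_eq, not_exists] at hx
    intro hxA
    obtain ⟨C, hC⟩ := hxA
    exact hx (C : ℝ) (fun n => hC n)

/-- From an upper bound on a sequence with `a 0 = 0`, extract properties of the
`ℝ≥0∞`-valued supremum of exponentials. -/
theorem sup_exp_props (a : ℕ → ℝ) (h0 : a 0 = 0) (C : ℝ) (hC : ∀ n, a n ≤ C) :
    (⨆ n, ENNReal.ofReal (Real.exp (a n))) ≠ ⊤ ∧
      (∀ n, Real.exp (a n) ≤ (⨆ n, ENNReal.ofReal (Real.exp (a n))).toReal) ∧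
      1 ≤ (⨆ n, ENNReal.ofReal (Real.exp (a n))).toReal := by
  set M := ⨆ n, ENNReal.ofReal (Real.exp (a n)) with hM
  have hle : M ≤ ENNReal.ofReal (Real.exp C) :=
    iSup_le fun n => ENNReal.ofReal_le_ofReal (Real.exp_le_exp.mpr (hC n))
  have hne : M ≠ ⊤ := (lt_of_le_of_lt hle ENNReal.ofReal_lt_top).ne
  have hget : ∀ n, Real.exp (a n) ≤ M.toReal := by
    intro n
    have h1 : ENNReal.ofReal (Real.exp (a n)) ≤ M := le_iSup (fun n => ENNReal.ofReal (Real.exp (a n))) n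
    have h2 := ENNReal.toReal_mono hne h1
    rwa [ENNReal.toReal_ofReal (Real.exp_pos _).le] at h2
  refine ⟨hne, hget, ?_⟩
  have := hget 0
  rwa [h0, Real.exp_zero] at this


lemma sum_Icc_one (h : ℕ → ℝ) (n : ℕ) :
    ∑ j ∈ Finset.Icc 1 n, h j = ∑ i ∈ Finset.range n, h (i + 1) := by
  induction n with
  | zero => simp
  | succ n ih =>
    rw [Finset.sum_Icc_succ_top (Nat.one_le_iff_ne_zero.mpr (Nat.succ_ne_zero n)), ih,
      Finset.sum_range_succ]

lemma birk_sub_const (T : X → X) (ψ : X → ℝ) (c : ℝ) (n : ℕ) (x : X) :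
    birk T (fun y => ψ y - c) n x = birk T ψ n x - n * c := by
  simp [birk, Finset.sum_sub_distrib]

lemma birk_const_sub (T : X → X) (ψ : X → ℝ) (c : ℝ) (n : ℕ) (x : X) :
    birk T (fun y => c - ψ y) n x = n * c - birk T ψ n x := by
  simp [birk, Finset.sum_sub_distrib]

end StmtAux

open StmtAux in
/-- Along backward orbits, products of an a.e. positive function with integrable
logarithm are controlled by an `ε`-fast function `V₂ ≥ 1`. -/
theorem stmt_1 {X : Type*} [MeasurableSpace X]
    (μ : Measure X) [IsProbabilityMeasure μ]
    (f g : X → X) (hf : MeasurePreserving f μ μ) (hg : MeasurePreserving g μ μ)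
    (hfg : ∀ x, f (g x) = x) (hgf : ∀ x, g (f x) = x)
    (herg : Ergodic f μ)
    (ε : ℝ) (hε : 0 < ε)
    (u : X → ℝ) (hu : Measurable u) (hupos : ∀ x, 0 < u x)
    (hlog : Integrable (fun x => Real.log (u x)) μ)
    (χ : ℝ) (hχ : χ = ∫ x, Real.log (u x) ∂μ) :
    ∃ V₂ : X → ℝ, Measurable V₂ ∧ (∀ x, 1 ≤ V₂ x) ∧
      -- `V₂` is `ε`-fast:
      (∃ S : X → ℝ, Measurable S ∧ (∀ x, 1 ≤ S x) ∧
        ∀ᵐ x ∂μ, ∀ q : ℕ, 1 ≤ q → V₂ (f^[q] x) ≤ Real.exp (q * ε) * S x) ∧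
      ∀ᵐ x ∂μ, ∀ n : ℕ, 1 ≤ n →
        ∏ j ∈ Finset.Icc 1 n, u (g^[j] x) ≤ V₂ x * Real.exp (n * (χ + ε)) := by
  -- notation
  set L : X → ℝ := fun y => Real.log (u y) with hL
  have hLmeas : Measurable L := Real.measurable_log.comp hu
  set φb : X → ℝ := fun y => L (g y) - (χ + ε) with hφb
  set φ₁ : X → ℝ := fun y => L y - (χ + ε / 2) with hφ₁
  set φ₂ : X → ℝ := fun y => (χ - ε / 2) - L y with hφ₂
  have hφbm : Measurable φb := (hLmeas.comp hg.measurable).sub measurable_const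
  have hφ₁m : Measurable φ₁ := hLmeas.sub measurable_const
  have hφ₂m : Measurable φ₂ := measurable_const.sub hLmeas
  -- integrability
  have hLg : Integrable (fun x => L (g x)) μ := by
    have : Integrable (L ∘ g) μ :=
      Integrable.comp_measurable (by rw [hg.map_eq]; exact hlog) hg.measurable
    exact this
  have hφbi : Integrable φb μ := hLg.sub (integrable_const _)
  have hφ₁i : Integrable φ₁ μ := hlog.sub (integrable_const _)
  have hφ₂i : Integrable φ₂ μ := (integrable_const _).sub hlog
  -- integrals
  have hχg : ∫ x, L (g x) ∂μ = χ := by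
    rw [hχ]
    have := integral_map (μ := μ) hg.measurable.aemeasurable
      (f := L) (by rw [hg.map_eq]; exact hLmeas.aestronglyMeasurable)
    rw [hg.map_eq] at this
    exact this.symm ▸ rfl
  have hIb : ∫ x, φb x ∂μ < 0 := by
    rw [hφb]
    rw [integral_sub hLg (integrable_const _), hχg, integral_const, probReal_univ]
    simp
    linarith
  have hI₁ : ∫ x, φ₁ x ∂μ < 0 := by
    rw [hφ₁]
    rw [integral_sub hlog (integrable_const _), ← hχ, integral_const, probReal_univ]
    simp
    linarith
  have hI₂ : ∫ x, φ₂ x ∂μ < 0 := by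
    rw [hφ₂]
    rw [integral_sub (integrable_const _) hlog, ← hχ, integral_const, probReal_univ]
    simp
    linarith
  -- ergodicity for f and for g
  have hprob : ∀ s : Set X, MeasurableSet s → μ sᶜ = 0 → μ s = 1 := fun s hs h =>
    (prob_compl_eq_zero_iff hs).mp h
  have hEf : ∀ s : Set X, MeasurableSet s → f ⁻¹' s = s → μ s = 0 ∨ μ s = 1 := by
    intro s hs hfs
    rcases herg.measure_self_or_compl_eq_zero hs hfs with h | h
    · exact Or.inl h
    · exact Or.inr (hprob s hs h)
  have hEg : ∀ s : Set X, MeasurableSet s → g ⁻¹' s = s → μ s = 0 ∨ μ s = 1 := by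
    intro s hs hgs
    have hfs : f ⁻¹' s = s := by
      ext x
      rw [Set.mem_preimage]
      constructor
      · intro h
        rw [← hgs, Set.mem_preimage, hgf] at h
        exact h
      · intro h
        rw [← hgs, Set.mem_preimage, hgf]
        exact h
    exact hEf s hs hfs
  -- a.e. boundedness of the three families of Birkhoff sums
  have hae_b : ∀ᵐ x ∂μ, ∃ C : ℝ, ∀ n, birk g φb n x ≤ C :=
    bdd_of_neg_mean μ hg hEg hφbm hφbi hIb
  have hae_1 : ∀ᵐ x ∂μ, ∃ C : ℝ, ∀ n, birk f φ₁ n x ≤ C :=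
    bdd_of_neg_mean μ hf hEf hφ₁m hφ₁i hI₁
  have hae_2 : ∀ᵐ x ∂μ, ∃ C : ℝ, ∀ n, birk f φ₂ n x ≤ C :=
    bdd_of_neg_mean μ hf hEf hφ₂m hφ₂i hI₂
  -- the suprema
  set Mb : X → ENNReal := fun x => ⨆ n, ENNReal.ofReal (Real.exp (birk g φb n x)) with hMb
  set M₁ : X → ENNReal := fun x => ⨆ n, ENNReal.ofReal (Real.exp (birk f φ₁ n x)) with hM₁
  set M₂ : X → ENNReal := fun x => ⨆ n, ENNReal.ofReal (Real.exp (birk f φ₂ n x)) with hM₂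
  have hMbm : Measurable Mb := Measurable.iSup fun n =>
    ENNReal.measurable_ofReal.comp (Real.measurable_exp.comp (birk_measurable hg.measurable hφbm n))
  have hM₁m : Measurable M₁ := Measurable.iSup fun n =>
    ENNReal.measurable_ofReal.comp (Real.measurable_exp.comp (birk_measurable hf.measurable hφ₁m n))
  have hM₂m : Measurable M₂ := Measurable.iSup fun n =>
    ENNReal.measurable_ofReal.comp (Real.measurable_exp.comp (birk_measurable hf.measurable hφ₂m n))
  -- the candidate functions
  set V₂ : X → ℝ := fun x => max 1 (Mb x).toReal with hV₂
  set S : X → ℝ := fun x => max 1 ((M₁ x).toReal * ((M₂ x).toReal + (Mb x).toReal)) with hS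
  have hV₂m : Measurable V₂ := measurable_const.max (ENNReal.measurable_toReal.comp hMbm)
  have hSm : Measurable S := measurable_const.max
    ((ENNReal.measurable_toReal.comp hM₁m).mul
      ((ENNReal.measurable_toReal.comp hM₂m).add (ENNReal.measurable_toReal.comp hMbm)))
  have hV₂1 : ∀ x, 1 ≤ V₂ x := fun x => le_max_left _ _
  have hS1 : ∀ x, 1 ≤ S x := fun x => le_max_left _ _
  -- orbit identities
  have hiter1 : ∀ q j : ℕ, j ≤ q → ∀ x, g^[j] (f^[q] x) = f^[q - j] x := by
    intro q j
    induction j with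
    | zero => intro _ x; simp
    | succ j ih =>
      intro h x
      have hj : j ≤ q := Nat.le_of_succ_le h
      rw [Function.iterate_succ_apply', ih hj x]
      have hqj : q - j = (q - (j + 1)) + 1 := by omega
      rw [hqj, Function.iterate_succ_apply', hgf]
  have hiter2 : ∀ q i : ℕ, ∀ x, g^[q + i] (f^[q] x) = g^[i] x := by
    intro q i x
    have h1 : g^[q] (f^[q] x) = x := by
      have := hiter1 q q (le_refl q) x
      simpa using this
    rw [add_comm, Function.iterate_add_apply, h1]
  -- sum decomposition: `Sg` = backward sums, `Tf` = forward sums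
  set Sg : ℕ → X → ℝ := fun n y => birk g (fun z => L (g z)) n y with hSg
  set Tf : ℕ → X → ℝ := fun m x => birk f L m x with hTf
  have hbirkb : ∀ n : ℕ, ∀ y, birk g φb n y = Sg n y - n * (χ + ε) := by
    intro n y
    rw [hSg, hφb]
    exact birk_sub_const g (fun z => L (g z)) (χ + ε) n y
  have hbirk1 : ∀ m : ℕ, ∀ x, birk f φ₁ m x = Tf m x - m * (χ + ε / 2) := by
    intro m x
    exact birk_sub_const f L (χ + ε / 2) m x
  have hbirk2 : ∀ m : ℕ, ∀ x, birk f φ₂ m x = m * (χ - ε / 2) - Tf m x := by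
    intro m x
    exact birk_const_sub f L (χ - ε / 2) m x
  have claimA : ∀ q : ℕ, ∀ n ≤ q, ∀ x, Sg n (f^[q] x) = Tf q x - Tf (q - n) x := by
    intro q n
    induction n with
    | zero => intro _ x; simp [hSg, hTf, birk_zero]
    | succ n ih =>
      intro h x
      have hn : n ≤ q := Nat.le_of_succ_le h
      have h1 : Sg (n + 1) (f^[q] x) = Sg n (f^[q] x) + L (g (g^[n] (f^[q] x))) :=
        birk_succ' g _ n (f^[q] x)
      have h2 : g (g^[n] (f^[q] x)) = g^[n + 1] (f^[q] x) :=
        (Function.iterate_succ_apply' g n (f^[q] x)).symm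
      have h3 : g^[n + 1] (f^[q] x) = f^[q - (n + 1)] x := hiter1 q (n + 1) h x
      have h4 : Tf (q - n) x = Tf (q - (n + 1)) x + L (f^[q - (n + 1)] x) := by
        have hqn : q - n = (q - (n + 1)) + 1 := by omega
        rw [hqn]
        exact birk_succ' f L (q - (n + 1)) x
      rw [h1, h2, h3, ih hn x, h4]
      ring
  have claimB : ∀ q m : ℕ, ∀ x, Sg (q + m) (f^[q] x) = Tf q x + Sg m x := by
    intro q m
    induction m with
    | zero =>
      intro x
      have := claimA q q (le_refl q) x
      simpa [hSg, hTf, birk_zero] using this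
    | succ m ih =>
      intro x
      have h1 : Sg (q + (m + 1)) (f^[q] x) = Sg (q + m) (f^[q] x) + L (g (g^[q + m] (f^[q] x))) := by
        have := birk_succ' g (fun z => L (g z)) (q + m) (f^[q] x)
        simpa [hSg, Nat.add_assoc] using this
      have h2 : g^[q + m] (f^[q] x) = g^[m] x := hiter2 q m x
      have h3 : Sg (m + 1) x = Sg m x + L (g (g^[m] x)) := birk_succ' g _ m x
      rw [h1, h2, ih x, h3]
      ring
  refine ⟨V₂, hV₂m, hV₂1, ⟨S, hSm, hS1, ?_⟩, ?_⟩
  · -- the ε-fast property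
    filter_upwards [hae_b, hae_1, hae_2] with x hxb hx1 hx2
    intro q hq
    obtain ⟨Cb, hCb⟩ := hxb
    obtain ⟨C1, hC1⟩ := hx1
    obtain ⟨C2, hC2⟩ := hx2
    have hble : ∀ k, Real.exp (birk g φb k x) ≤ (Mb x).toReal := by
      simp only [hMb]
      exact (sup_exp_props _ (birk_zero g φb x) Cb hCb).2.1
    have hb1 : 1 ≤ (Mb x).toReal := by
      simp only [hMb]
      exact (sup_exp_props _ (birk_zero g φb x) Cb hCb).2.2
    have h1le : ∀ k, Real.exp (birk f φ₁ k x) ≤ (M₁ x).toReal := by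
      simp only [hM₁]
      exact (sup_exp_props _ (birk_zero f φ₁ x) C1 hC1).2.1
    have h11 : 1 ≤ (M₁ x).toReal := by
      simp only [hM₁]
      exact (sup_exp_props _ (birk_zero f φ₁ x) C1 hC1).2.2
    have h2le : ∀ k, Real.exp (birk f φ₂ k x) ≤ (M₂ x).toReal := by
      simp only [hM₂]
      exact (sup_exp_props _ (birk_zero f φ₂ x) C2 hC2).2.1
    have h21 : 1 ≤ (M₂ x).toReal := by
      simp only [hM₂]
      exact (sup_exp_props _ (birk_zero f φ₂ x) C2 hC2).2.2
    set t1 := (M₁ x).toReal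
    set t2 := (M₂ x).toReal
    set tb := (Mb x).toReal
    have ht10 : (0:ℝ) ≤ t1 := le_trans zero_le_one h11
    have ht20 : (0:ℝ) ≤ t2 := le_trans zero_le_one h21
    have htb0 : (0:ℝ) ≤ tb := le_trans zero_le_one hb1
    have hSeq : S x = max 1 (t1 * (t2 + tb)) := by simp only [hS]; rfl
    have hS12 : t1 * t2 ≤ S x := by
      rw [hSeq]
      refine le_trans ?_ (le_max_right _ _)
      exact mul_le_mul_of_nonneg_left (le_add_of_nonneg_right htb0) ht10
    have hS1b : t1 * tb ≤ S x := by
      rw [hSeq]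
      refine le_trans ?_ (le_max_right _ _)
      exact mul_le_mul_of_nonneg_left (le_add_of_nonneg_left ht20) ht10
    have key : ∀ n : ℕ, Real.exp (birk g φb n (f^[q] x)) ≤ Real.exp (q * ε) * S x := by
      intro n
      rcases le_or_gt n q with hnq | hnq
      · have hc : ((q - n : ℕ) : ℝ) = (q : ℝ) - n := by
          push_cast [hnq]
          ring
        have e1 : birk g φb n (f^[q] x) =
            birk f φ₁ q x + birk f φ₂ (q - n) x + ε * ((q : ℝ) - 3 / 2 * n) := by
          rw [hbirkb, hbirk1, hbirk2, claimA q n hnq x, hc]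
          ring
        rw [e1, Real.exp_add, Real.exp_add]
        have b3 : Real.exp (ε * ((q : ℝ) - 3 / 2 * n)) ≤ Real.exp ((q : ℝ) * ε) := by
          apply Real.exp_le_exp.mpr
          nlinarith [Nat.cast_nonneg (α := ℝ) n, hε.le]
        calc Real.exp (birk f φ₁ q x) * Real.exp (birk f φ₂ (q - n) x) *
              Real.exp (ε * ((q : ℝ) - 3 / 2 * n))
            ≤ t1 * t2 * Real.exp ((q : ℝ) * ε) := by
              apply mul_le_mul _ b3 (Real.exp_pos _).le (by positivity)
              exact mul_le_mul (h1le q) (h2le (q - n)) (Real.exp_pos _).le ht10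
          _ = Real.exp ((q : ℝ) * ε) * (t1 * t2) := by ring
          _ ≤ Real.exp ((q : ℝ) * ε) * S x :=
              mul_le_mul_of_nonneg_left hS12 (Real.exp_pos _).le
      · set m := n - q with hm
        have hnm : n = q + m := by omega
        have e2 : birk g φb n (f^[q] x) =
            birk f φ₁ q x + birk g φb m x + (-((q : ℝ) * ε) / 2) := by
          rw [hnm, hbirkb, claimB q m x, hbirk1, hbirkb]
          push_cast
          ring
        rw [e2, Real.exp_add, Real.exp_add]
        have b3 : Real.exp (-((q : ℝ) * ε) / 2) ≤ Real.exp ((q : ℝ) * ε) := by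
          apply Real.exp_le_exp.mpr
          nlinarith [Nat.cast_nonneg (α := ℝ) q, hε.le]
        calc Real.exp (birk f φ₁ q x) * Real.exp (birk g φb m x) *
              Real.exp (-((q : ℝ) * ε) / 2)
            ≤ t1 * tb * Real.exp ((q : ℝ) * ε) := by
              apply mul_le_mul _ b3 (Real.exp_pos _).le (by positivity)
              exact mul_le_mul (h1le q) (hble m) (Real.exp_pos _).le ht10
          _ = Real.exp ((q : ℝ) * ε) * (t1 * tb) := by ring
          _ ≤ Real.exp ((q : ℝ) * ε) * S x :=
              mul_le_mul_of_nonneg_left hS1b (Real.exp_pos _).le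
    have hSx0 : (0:ℝ) ≤ S x := le_trans zero_le_one (hS1 x)
    have hfin : Mb (f^[q] x) ≤ ENNReal.ofReal (Real.exp ((q : ℝ) * ε) * S x) := by
      simp only [hMb]
      exact iSup_le fun n => ENNReal.ofReal_le_ofReal (key n)
    have htr : (Mb (f^[q] x)).toReal ≤ Real.exp ((q : ℝ) * ε) * S x :=
      ENNReal.toReal_le_of_le_ofReal (mul_nonneg (Real.exp_pos _).le hSx0) hfin
    have hone : (1:ℝ) ≤ Real.exp ((q : ℝ) * ε) * S x := by
      have he1 : (1:ℝ) ≤ Real.exp ((q : ℝ) * ε) :=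
        Real.one_le_exp (by positivity)
      nlinarith [hS1 x]
    show max 1 (Mb (f^[q] x)).toReal ≤ Real.exp ((q : ℝ) * ε) * S x
    exact max_le hone htr
  · -- the product bound
    filter_upwards [hae_b] with x hxb
    intro n _
    obtain ⟨Cb, hCb⟩ := hxb
    have hble : ∀ k, Real.exp (birk g φb k x) ≤ (Mb x).toReal := by
      simp only [hMb]
      exact (sup_exp_props _ (birk_zero g φb x) Cb hCb).2.1
    have h1 : Real.exp (birk g φb n x) ≤ V₂ x := by
      simp only [hV₂]
      exact le_trans (hble n) (le_max_right _ _)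
    have hsum : ∑ j ∈ Finset.Icc 1 n, L (g^[j] x) = Sg n x := by
      rw [sum_Icc_one (fun j => L (g^[j] x)) n]
      simp only [hSg, birk]
      refine Finset.sum_congr rfl fun i _ => ?_
      rw [Function.iterate_succ_apply']
    have hprodeq : ∏ j ∈ Finset.Icc 1 n, u (g^[j] x) =
        Real.exp (∑ j ∈ Finset.Icc 1 n, L (g^[j] x)) := by
      rw [Real.exp_sum]
      exact Finset.prod_congr rfl fun j _ => (Real.exp_log (hupos _)).symm
    rw [hprodeq, hsum]
    have hSgeq : Sg n x = birk g φb n x + (n : ℝ) * (χ + ε) := by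
      rw [hbirkb]
      ring
    rw [hSgeq, Real.exp_add]
    exact mul_le_mul_of_nonneg_right h1 (Real.exp_pos _).le
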